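/- A 2×2 complex matrix A is universal (i.e., for every analytic function φ the Jacobian of x ↦ x + φ(Ax) is identically a nonzero constant) if and only if A is one of the following forms for some a ∈ ℂ: [[0,a],[0,0]], [[0,0],[a,0]], or [[a,−a],[a,−a]]. -/

import Mathlib

open Matrix BigOperators

/-- Jacobian determinant of a map `f : ℂ^ι → ℂ^ι` at `x`. -/
noncomputable def jacDet {ι : Type*} [Fintype ι] [DecidableEq ι]
    (f : (ι → ℂ) → (ι → ℂ)) (x : ι → ℂ) : ℂ :=
  (LinearMap.toMatrix (Pi.basisFun ℂ ι) (Pi.basisFun ℂ ι)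
    (fderiv ℂ f x).toLinearMap).det

/-- The map `x ↦ x + φ(Ax)`, with `φ` applied entrywise. -/
noncomputable def phiMap {ι : Type*} [Fintype ι] (A : Matrix ι ι ℂ) (φ : ℂ → ℂ)
    (x : ι → ℂ) : ι → ℂ :=
  fun j => x j + φ (A.mulVec x j)

/-- Domain of definition of `x ↦ x + φ(Ax)` for `φ` defined on `Ω`. -/
def phiDom {ι : Type*} [Fintype ι] (A : Matrix ι ι ℂ) (Ω : Set ℂ) : Set (ι → ℂ) :=
  {x | ∀ j, A.mulVec x j ∈ Ω}

/-- `(A, φ)` is a good pair: the Jacobian of `x + φ(Ax)` is identically a nonzero constant. -/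
def IsGoodPair {ι : Type*} [Fintype ι] [DecidableEq ι]
    (A : Matrix ι ι ℂ) (Ω : Set ℂ) (φ : ℂ → ℂ) : Prop :=
  ∃ c : ℂ, c ≠ 0 ∧ ∀ x ∈ phiDom A Ω, jacDet (phiMap A φ) x = c

/-- A matrix is universal if it forms a good pair with every analytic function. -/
def IsUniversal {ι : Type*} [Fintype ι] [DecidableEq ι] (A : Matrix ι ι ℂ) : Prop :=
  ∀ (Ω : Set ℂ) (φ : ℂ → ℂ), IsOpen Ω → Ω.Nonempty → IsPreconnected Ω →
    AnalyticOn ℂ φ Ω → (phiDom A Ω).Nonempty → IsGoodPair A Ω φ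

/-- The principal minor of `A` indexed by `I`. -/
noncomputable def principalMinor {ι : Type*} [DecidableEq ι] (A : Matrix ι ι ℂ)
    (I : Finset ι) : ℂ :=
  (A.submatrix (fun i : I => (i : ι)) (fun i : I => (i : ι))).det

lemma jacDet_phiMap_eq (A : Matrix (Fin 2) (Fin 2) ℂ) (φ : ℂ → ℂ) (x : Fin 2 → ℂ)
    (hφ : ∀ j, DifferentiableAt ℂ φ (A.mulVec x j)) :
    jacDet (phiMap A φ) x =
      1 + deriv φ (A.mulVec x 0) * A 0 0 + deriv φ (A.mulVec x 1) * A 1 1 +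
        deriv φ (A.mulVec x 0) * deriv φ (A.mulVec x 1) * A.det := by
  classical
  unfold jacDet phiMap
  set d : Fin 2 → ℂ := fun j => deriv φ (A.mulVec x j) with hd
  set M : (Fin 2 → ℂ) →L[ℂ] (Fin 2 → ℂ) := LinearMap.toContinuousLinearMap (Matrix.mulVecLin A) with hM
  set L : (Fin 2 → ℂ) →L[ℂ] (Fin 2 → ℂ) := ContinuousLinearMap.pi
    (fun j => ContinuousLinearMap.proj j + d j • ((ContinuousLinearMap.proj j).comp M)) with hLdef
  have hL : HasFDerivAt (fun x : Fin 2 → ℂ => fun j => x j + φ (A.mulVec x j)) L x := by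
    rw [hasFDerivAt_pi']
    intro j
    rw [hLdef, ContinuousLinearMap.proj_pi]
    have h1 := hasFDerivAt_apply (𝕜 := ℂ) (F' := fun _ : Fin 2 => ℂ) j x
    have h2 : HasFDerivAt (fun x : Fin 2 → ℂ => A.mulVec x j)
        ((ContinuousLinearMap.proj j).comp M) x :=
      ((ContinuousLinearMap.proj j).comp M).hasFDerivAt
    have h3 := (hφ j).hasDerivAt.comp_hasFDerivAt x h2
    exact h1.add h3
  rw [hL.fderiv]
  have hmat : LinearMap.toMatrix (Pi.basisFun ℂ (Fin 2)) (Pi.basisFun ℂ (Fin 2)) L.toLinearMap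
      = Matrix.of (fun i j => (if i = j then 1 else 0) + d i * A i j) := by
    ext i j
    rw [LinearMap.toMatrix_apply]
    simp only [Pi.basisFun_apply, Pi.basisFun_repr, ContinuousLinearMap.coe_coe, hLdef,
      ContinuousLinearMap.pi_apply, ContinuousLinearMap.add_apply, ContinuousLinearMap.smul_apply,
      ContinuousLinearMap.comp_apply, ContinuousLinearMap.proj_apply, hM,
      LinearMap.coe_toContinuousLinearMap', Matrix.mulVecLin_apply, Matrix.mulVec_single]
    simp [Pi.single_apply, eq_comm, smul_eq_mul]
  rw [hmat, Matrix.det_fin_two, Matrix.det_fin_two]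
  simp only [Fin.isValue, Matrix.of_apply, hd]
  norm_num
  ring

lemma deriv_half_sq (y : ℂ) : deriv (fun z : ℂ => z ^ 2 / 2) y = y := by
  have h := (hasDerivAt_pow 2 y).div_const 2
  rw [h.deriv]; push_cast; ring

lemma deriv_third_cube (y : ℂ) : deriv (fun z : ℂ => z ^ 3 / 3) y = y ^ 2 := by
  have h := (hasDerivAt_pow 3 y).div_const 3
  rw [h.deriv]; push_cast; ring

lemma analyticOn_half_sq : AnalyticOn ℂ (fun z : ℂ => z ^ 2 / 2) Set.univ :=
  (((differentiable_pow 2).div_const 2).differentiableOn.analyticOnNhd isOpen_univ).analyticOn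

lemma analyticOn_third_cube : AnalyticOn ℂ (fun z : ℂ => z ^ 3 / 3) Set.univ :=
  (((differentiable_pow 3).div_const 3).differentiableOn.analyticOnNhd isOpen_univ).analyticOn

lemma algebra_classify (p q r s : ℂ)
    (A1 : p * p + r * s = 0)
    (B1 : p * r * (p * s - q * r) = 0)
    (A2 : q * p + s * s = 0)
    (B2 : q * s * (p * s - q * r) = 0)
    (B3 : (p + q) * (r + s) * (p * s - q * r) = 0)
    (B4 : (p - q) * (r - s) * (p * s - q * r) = 0)
    (C1 : p ^ 2 * p + r ^ 2 * s + p ^ 2 * r ^ 2 * (p * s - q * r) = 0) :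
    ∃ a : ℂ, (p = 0 ∧ q = a ∧ r = 0 ∧ s = 0) ∨ (p = 0 ∧ q = 0 ∧ r = a ∧ s = 0)
      ∨ (p = a ∧ q = -a ∧ r = a ∧ s = -a) := by
  have hD : p * s - q * r = 0 := by
    by_contra hD
    have hpr : p * r = 0 := by
      rcases mul_eq_zero.mp B1 with h | h
      · exact h
      · exact absurd h hD
    have hqs : q * s = 0 := by
      rcases mul_eq_zero.mp B2 with h | h
      · exact h
      · exact absurd h hD
    have hB5 : p * s + q * r = 0 := by
      have h3 : (p + q) * (r + s) = 0 := by
        rcases mul_eq_zero.mp B3 with h | h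
        · exact h
        · exact absurd h hD
      have h4 : (p - q) * (r - s) = 0 := by
        rcases mul_eq_zero.mp B4 with h | h
        · exact h
        · exact absurd h hD
      linear_combination h3 / 2 - h4 / 2
    by_cases hp : p = 0
    · apply hD
      have hqr : q * r = 0 := by linear_combination hB5 - s * hp
      linear_combination s * hp - hqr
    · have hr0 : r = 0 := by
        rcases mul_eq_zero.mp hpr with h | h
        · exact absurd h hp
        · exact h
      apply hD
      linear_combination hB5 - 2 * q * hr0
  have hC1' : p ^ 2 * p + r ^ 2 * s = 0 := by
    linear_combination C1 - p ^ 2 * r ^ 2 * hD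
  by_cases hrz : r = 0
  · have hp0 : p = 0 := by
      have : p * p = 0 := by linear_combination A1 - hrz * s
      exact mul_self_eq_zero.mp this
    have hs0 : s = 0 := by
      have : s * s = 0 := by linear_combination A2 - q * hp0
      exact mul_self_eq_zero.mp this
    exact ⟨q, Or.inl ⟨hp0, rfl, hrz, hs0⟩⟩
  · by_cases hqz : q = 0
    · have hs0 : s = 0 := by
        have : s * s = 0 := by linear_combination A2 - p * hqz
        exact mul_self_eq_zero.mp this
      have hp0 : p = 0 := by
        have : p * p = 0 := by linear_combination A1 - r * hs0
        exact mul_self_eq_zero.mp this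
      exact ⟨r, Or.inr (Or.inl ⟨hp0, hqz, rfl, hs0⟩)⟩
    · have hsq : s = q := by
        have h1 : r ^ 2 * (s - q) = 0 := by
          linear_combination hC1' - p * A1 + r * hD
        have h2 : s - q = 0 := by
          rcases mul_eq_zero.mp h1 with h | h
          · exact absurd (pow_eq_zero_iff (n := 2) two_ne_zero |>.mp h) hrz
          · exact h
        exact sub_eq_zero.mp h2
      have hpq : p = -q := by
        have h1 : q * (p + q) = 0 := by linear_combination A2 - (s + q) * hsq
        rcases mul_eq_zero.mp h1 with h | h
        · exact absurd h hqz
        · exact eq_neg_of_add_eq_zero_left h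
      have hrq : r = -q := by
        have h1 : q * (r + q) = 0 := by linear_combination -hD + s * hpq - q * hsq
        rcases mul_eq_zero.mp h1 with h | h
        · exact absurd h hqz
        · exact eq_neg_of_add_eq_zero_left h
      exact ⟨-q, Or.inr (Or.inr ⟨hpq, by rw [neg_neg], hrq, by rw [hsq, neg_neg]⟩)⟩

theorem stmt6 (A : Matrix (Fin 2) (Fin 2) ℂ) :
    IsUniversal A ↔ ∃ a : ℂ,
      A = !![0, a; 0, 0] ∨ A = !![0, 0; a, 0] ∨ A = !![a, -a; a, -a] := by
  constructor
  · intro hA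
    have hdet : A.det = A 0 0 * A 1 1 - A 0 1 * A 1 0 := by rw [Matrix.det_fin_two]
    have hm : ∀ (a b : ℂ) (j : Fin 2), A.mulVec ![a, b] j = A j 0 * a + A j 1 * b := by
      intro a b j
      simp [Matrix.mulVec, dotProduct, Fin.sum_univ_two]
    have hdomfull : ∀ v : Fin 2 → ℂ, v ∈ phiDom A Set.univ := fun v j => trivial
    have hid1 : ∀ v : Fin 2 → ℂ,
        A.mulVec v 0 * A 0 0 + A.mulVec v 1 * A 1 1
          + A.mulVec v 0 * A.mulVec v 1 * A.det = 0 := by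
      obtain ⟨c, hc0, hc⟩ := hA Set.univ (fun z => z ^ 2 / 2) isOpen_univ ⟨0, trivial⟩
        isPreconnected_univ analyticOn_half_sq ⟨0, hdomfull 0⟩
      have hval : ∀ v : Fin 2 → ℂ,
          1 + A.mulVec v 0 * A 0 0 + A.mulVec v 1 * A 1 1
            + A.mulVec v 0 * A.mulVec v 1 * A.det = c := by
        intro v
        have := hc v (hdomfull v)
        rwa [jacDet_phiMap_eq A _ v (fun j => by fun_prop), deriv_half_sq, deriv_half_sq] at this
      have h0 := hval 0
      simp [Matrix.mulVec_zero] at h0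
      intro v
      have hv := hval v
      rw [← h0] at hv
      linear_combination hv
    have hid2 : ∀ v : Fin 2 → ℂ,
        (A.mulVec v 0) ^ 2 * A 0 0 + (A.mulVec v 1) ^ 2 * A 1 1
          + (A.mulVec v 0) ^ 2 * (A.mulVec v 1) ^ 2 * A.det = 0 := by
      obtain ⟨c, hc0, hc⟩ := hA Set.univ (fun z => z ^ 3 / 3) isOpen_univ ⟨0, trivial⟩
        isPreconnected_univ analyticOn_third_cube ⟨0, hdomfull 0⟩
      have hval : ∀ v : Fin 2 → ℂ,
          1 + (A.mulVec v 0) ^ 2 * A 0 0 + (A.mulVec v 1) ^ 2 * A 1 1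
            + (A.mulVec v 0) ^ 2 * (A.mulVec v 1) ^ 2 * A.det = c := by
        intro v
        have := hc v (hdomfull v)
        rwa [jacDet_phiMap_eq A _ v (fun j => by fun_prop), deriv_third_cube,
          deriv_third_cube] at this
      have h0 := hval 0
      simp [Matrix.mulVec_zero] at h0
      intro v
      have hv := hval v
      rw [← h0] at hv
      linear_combination hv
    have e1 := hid1 ![1, 0]
    have e1' := hid1 ![-1, 0]
    have e2 := hid1 ![0, 1]
    have e2' := hid1 ![0, -1]
    have e3 := hid1 ![1, 1]
    have e3' := hid1 ![-1, -1]
    have e4 := hid1 ![1, -1]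
    have e4' := hid1 ![-1, 1]
    have f1 := hid2 ![1, 0]
    simp only [hm, hdet] at e1 e1' e2 e2' e3 e3' e4 e4' f1
    obtain ⟨a, hcase⟩ := algebra_classify (A 0 0) (A 0 1) (A 1 0) (A 1 1)
      (by linear_combination e1 / 2 - e1' / 2)
      (by linear_combination e1 / 2 + e1' / 2)
      (by linear_combination e2 / 2 - e2' / 2)
      (by linear_combination e2 / 2 + e2' / 2)
      (by linear_combination e3 / 2 + e3' / 2)
      (by linear_combination e4 / 2 + e4' / 2)
      (by linear_combination f1)
    refine ⟨a, ?_⟩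
    rcases hcase with ⟨h1, h2, h3, h4⟩ | ⟨h1, h2, h3, h4⟩ | ⟨h1, h2, h3, h4⟩
    · exact Or.inl (by rw [Matrix.eta_fin_two A, h1, h2, h3, h4])
    · exact Or.inr (Or.inl (by rw [Matrix.eta_fin_two A, h1, h2, h3, h4]))
    · exact Or.inr (Or.inr (by rw [Matrix.eta_fin_two A, h1, h2, h3, h4]))
  · rintro ⟨a, h | h | h⟩ <;>
      subst h <;>
      intro Ω φ hΩ hne hconn hφ hdom <;>
      refine ⟨1, one_ne_zero, ?_⟩ <;>
      intro x hx <;>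
      rw [jacDet_phiMap_eq _ φ x (fun j =>
        ((hΩ.analyticOn_iff_analyticOnNhd.mp hφ) _ (hx j)).differentiableAt)]
    · norm_num [Matrix.det_fin_two]
    · norm_num [Matrix.det_fin_two]
    · have huv : (!![a, -a; a, -a] : Matrix (Fin 2) (Fin 2) ℂ).mulVec x 0
          = (!![a, -a; a, -a] : Matrix (Fin 2) (Fin 2) ℂ).mulVec x 1 := by
        simp [Matrix.mulVec, dotProduct, Fin.sum_univ_two]
      rw [huv]
      norm_num [Matrix.det_fin_two]
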